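/- Let Ω ⊆ ℂ^d be a bounded domain whose Bergman metric g_Ω satisfies: there is a C² function λ : Ω → ℝ with (1/C)·g_Ω ≤ L(λ) ≤ C·g_Ω and ‖∂λ‖_{L(λ)} ≤ 1. If σ_{d-q+1}(g_{Ω,z}) → ∞ as z → ∂Ω, then Ω satisfies McNeal's condition (P̃_q): for each M > 0 there is a C² plurisubharmonic λ_M with ‖∂λ_M‖_{L(λ_M)} ≤ 1 and σ_{d-q+1}(L(λ_M)) ≥ M outside a compact subset of Ω. -/

import Mathlib

open Complex MeasureTheory Metric Set
open scoped ENNReal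

noncomputable section

/-- `ℂ^d` with the Euclidean norm. -/
abbrev Ed (d : ℕ) := EuclideanSpace ℂ (Fin d)

instance (d : ℕ) : MeasurableSpace (Ed d) := borel _
instance (d : ℕ) : BorelSpace (Ed d) := ⟨rfl⟩
instance (d : ℕ) : MeasureSpace (Ed d) :=
  ⟨(volume : Measure (Fin d → ℂ)).map ((WithLp.equiv 2 (Fin d → ℂ)).symm)⟩

/-- The Bergman kernel of `Ω` on the diagonal:
`B_Ω(z,z) = sup {|f(z)|² : f holomorphic on Ω, ∫_Ω |f|² ≤ 1}`. -/
def bergmanDiag {d : ℕ} (Ω : Set (Ed d)) (z : Ed d) : ℝ :=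
  sSup { y : ℝ | ∃ f : Ed d → ℂ, DifferentiableOn ℂ f Ω ∧
    (∫ w in Ω, ‖f w‖ ^ 2) ≤ 1 ∧ y = ‖f z‖ ^ 2 }

/-- The `i`-th standard basis vector of `ℂ^d`. -/
def basisVec (d : ℕ) (i : Fin d) : Ed d := EuclideanSpace.single i 1

/-- The Wirtinger derivative `∂f/∂z_i`. -/
def wderiv {d : ℕ} (i : Fin d) (f : Ed d → ℂ) (z : Ed d) : ℂ :=
  (1/2) * (fderiv ℝ f z (basisVec d i) - Complex.I * fderiv ℝ f z (Complex.I • basisVec d i))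

/-- The Wirtinger derivative `∂f/∂z̄_i`. -/
def wbarderiv {d : ℕ} (i : Fin d) (f : Ed d → ℂ) (z : Ed d) : ℂ :=
  (1/2) * (fderiv ℝ f z (basisVec d i) + Complex.I * fderiv ℝ f z (Complex.I • basisVec d i))

/-- The matrix `[∂²f/∂z_i∂z̄_j]` of a real-valued function `f`. -/
def leviMatrix {d : ℕ} (f : Ed d → ℝ) (z : Ed d) : Matrix (Fin d) (Fin d) ℂ :=
  fun i j => wderiv i (fun w => wbarderiv j (fun u => (f u : ℂ)) w) z

/-- The Levi form `L(f)(ξ,ξ) = Σ_{i,j} (∂²f/∂z_i∂z̄_j) ξ_i ξ̄_j`. -/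
def leviForm {d : ℕ} (f : Ed d → ℝ) (z : Ed d) (ξ : Ed d) : ℂ :=
  ∑ i, ∑ j, leviMatrix f z i j * ξ i * (starRingEnd ℂ) (ξ j)

/-- The `(1,0)`-form `∂f` applied to a vector `ξ`. -/
def delForm {d : ℕ} (f : Ed d → ℝ) (z : Ed d) (ξ : Ed d) : ℂ :=
  ∑ i, wderiv i (fun w => (f w : ℂ)) z * ξ i

/-- The Bergman metric of `Ω` at `z`, as the matrix `[∂² log B_Ω(z,z)/∂z_i∂z̄_j]`. -/
def bergmanMetricMatrix {d : ℕ} (Ω : Set (Ed d)) (z : Ed d) : Matrix (Fin d) (Fin d) ℂ :=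
  leviMatrix (fun w => Real.log (bergmanDiag Ω w)) z

/-- The Bergman metric of `Ω` as a quadratic form: `g_{Ω,z}(ξ,ξ)`. -/
def bergmanMetric {d : ℕ} (Ω : Set (Ed d)) (z ξ : Ed d) : ℝ :=
  (leviForm (fun w => Real.log (bergmanDiag Ω w)) z ξ).re

/-- The (infinitesimal) Kobayashi metric of `Ω`. -/
def kobayashi {d : ℕ} (Ω : Set (Ed d)) (z v : Ed d) : ℝ :=
  sInf { r : ℝ | ∃ (ξ : ℂ) (φ : ℂ → Ed d), DifferentiableOn ℂ φ (ball 0 1) ∧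
    MapsTo φ (ball 0 1) Ω ∧ φ 0 = z ∧ ξ • deriv φ 0 = v ∧ r = ‖ξ‖ }

/-- Auxiliary: the nonnegative part of an extended real number, in `ℝ≥0∞`. -/
def erealToENNReal (x : EReal) : ℝ≥0∞ := if x = ⊤ then ⊤ else ENNReal.ofReal x.toReal

/-- A nonpositive plurisubharmonic function on `Ω` (values in `EReal`, `⊥ = -∞` allowed):
upper semicontinuous and satisfying the sub-mean value inequality on complex disks. -/
def NegPSHOn {d : ℕ} (u : Ed d → EReal) (Ω : Set (Ed d)) : Prop :=
  (∀ z ∈ Ω, u z ≤ 0) ∧ UpperSemicontinuousOn u Ω ∧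
  ∀ z ∈ Ω, ∀ v : Ed d, (∀ c : ℂ, ‖c‖ ≤ 1 → z + c • v ∈ Ω) →
    (∫⁻ θ in Set.Ioc (0:ℝ) (2 * Real.pi),
        erealToENNReal (-(u (z + Complex.exp (θ * Complex.I) • v)))) ≤
      ENNReal.ofReal (2 * Real.pi) * erealToENNReal (-(u z))

/-- The pluricomplex Green function `G_Ω(z,w)` of `Ω` with pole at `w`. -/
def greenFunction {d : ℕ} (Ω : Set (Ed d)) (z w : Ed d) : EReal :=
  sSup { y : EReal | ∃ u : Ed d → EReal, NegPSHOn u Ω ∧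
    (∃ C : ℝ, ∀ᶠ x in nhdsWithin w {w}ᶜ, x ∈ Ω → u x ≤ ((Real.log ‖x - w‖ + C : ℝ) : EReal)) ∧
    y = u z }

-- The extended logarithm `log‖w‖`, equal to `-∞` at `w = 0`.
open scoped Classical in
def elog {d : ℕ} (w : Ed d) : EReal := if w = 0 then ⊥ else ((Real.log ‖w‖ : ℝ) : EReal)

/-- The distance on `Ω` induced by a (pointwise quadratic-form) metric `g`: the infimum of
lengths of `C¹` curves in `Ω` joining the two points. -/
def metricDist {d : ℕ} (Ω : Set (Ed d)) (g : Ed d → Ed d → ℝ) (x y : Ed d) : ℝ :=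
  sInf { L : ℝ | ∃ γ : ℝ → Ed d, ContDiffOn ℝ 1 γ (Set.Icc 0 1) ∧
    (∀ t ∈ Set.Icc (0:ℝ) 1, γ t ∈ Ω) ∧ γ 0 = x ∧ γ 1 = y ∧
    L = ∫ t in (0:ℝ)..1, Real.sqrt (g (γ t) (deriv γ t)) }

/-- Iterated Wirtinger derivative `∂^{|a|}/∂z^a` for a multi-index `a`. -/
def wmulti {d : ℕ} (a : Fin d → ℕ) (f : Ed d → ℂ) : Ed d → ℂ :=
  (List.finRange d).foldr (fun i g => (wderiv i)^[a i] g) f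

/-- Iterated conjugate Wirtinger derivative `∂^{|b|}/∂z̄^b` for a multi-index `b`. -/
def wbarmulti {d : ℕ} (b : Fin d → ℕ) (f : Ed d → ℂ) : Ed d → ℂ :=
  (List.finRange d).foldr (fun i g => (wbarderiv i)^[b i] g) f

/-- The Rayleigh quotient of a Hermitian matrix. -/
def rayleigh {d : ℕ} (A : Matrix (Fin d) (Fin d) ℂ) (v : Fin d → ℂ) : ℝ :=
  (dotProduct (star v) (A.mulVec v)).re / (∑ i, Complex.normSq (v i))

/-- `σ_{d-q+1}(A)` via Courant–Fischer: the inf over `q`-dimensional subspaces `V` of the sup of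
the Rayleigh quotient over nonzero `v ∈ V`. -/
def smallEig {d : ℕ} (q : ℕ) (A : Matrix (Fin d) (Fin d) ℂ) : ℝ :=
  sInf { m : ℝ | ∃ V : Submodule ℂ (Fin d → ℂ), Module.finrank ℂ V = q ∧
    m = sSup { r : ℝ | ∃ v ∈ V, v ≠ 0 ∧ r = rayleigh A v } }

/-- A reproducing (Bergman) kernel for the domain `Ω`. -/
structure IsBergmanKernel {d : ℕ} (Ω : Set (Ed d)) (K : Ed d → Ed d → ℂ) : Prop where
  holo_fst : ∀ w ∈ Ω, DifferentiableOn ℂ (fun u => K u w) Ω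
  sq_int : ∀ w ∈ Ω, IntegrableOn (fun u => ‖K u w‖ ^ 2) Ω
  hermitian : ∀ u ∈ Ω, ∀ w ∈ Ω, K w u = (starRingEnd ℂ) (K u w)
  reproducing : ∀ f : Ed d → ℂ, DifferentiableOn ℂ f Ω → IntegrableOn (fun w => ‖f w‖ ^ 2) Ω →
    ∀ z ∈ Ω, f z = ∫ w in Ω, K z w * f w

/-- Pseudoconvexity via a continuous plurisubharmonic exhaustion function. -/
def IsPseudoconvex {d : ℕ} (Ω : Set (Ed d)) : Prop :=
  IsOpen Ω ∧ ∃ u : Ed d → ℝ, ContinuousOn u Ω ∧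
    (∀ z ∈ Ω, ∀ v : Ed d, (∀ c : ℂ, ‖c‖ ≤ 1 → z + c • v ∈ Ω) →
      u z ≤ (2 * Real.pi)⁻¹ * ∫ θ in (0:ℝ)..(2 * Real.pi), u (z + Complex.exp (θ * Complex.I) • v)) ∧
    ∀ c : ℝ, IsCompact { z ∈ Ω | u z ≤ c }

open scoped Classical


lemma dot_eq_levi {d : ℕ} (f : Ed d → ℝ) (z : Ed d) (v : Fin d → ℂ) :
    dotProduct (star v) ((leviMatrix f z).mulVec v)
      = leviForm f z ((WithLp.equiv 2 (Fin d → ℂ)).symm (star v)) := by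
  unfold leviForm
  simp only [dotProduct, Matrix.mulVec, Finset.mul_sum, WithLp.equiv_symm_apply, PiLp.toLp_apply,
    Pi.star_apply, RingHom.coe_coe]
  refine Finset.sum_congr rfl fun i _ => Finset.sum_congr rfl fun j _ => ?_
  simp only [starRingEnd_apply, star_star]
  ring

lemma rayleigh_le {d : ℕ} (A : Matrix (Fin d) (Fin d) ℂ) (v : Fin d → ℂ) :
    rayleigh A v ≤ ∑ i, ∑ j, ‖A i j‖ := by
  set B := ∑ i, ∑ j, ‖A i j‖ with hB
  have hB0 : 0 ≤ B := Finset.sum_nonneg fun i _ => Finset.sum_nonneg fun j _ => norm_nonneg _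
  have hden0 : 0 ≤ ∑ i, Complex.normSq (v i) := Finset.sum_nonneg fun i _ => Complex.normSq_nonneg _
  rcases eq_or_lt_of_le hden0 with h0 | hpos
  · simp [rayleigh, ← h0, hB0]
  · set denom := ∑ i, Complex.normSq (v i) with hden
    have hvb : ∀ i j, ‖v i‖ * ‖v j‖ ≤ denom := by
      intro i j
      have h1 : ‖v i‖ ^ 2 ≤ denom := by
        rw [Complex.sq_norm]
        exact Finset.single_le_sum (f := fun i => Complex.normSq (v i))
          (fun i _ => Complex.normSq_nonneg _) (Finset.mem_univ i)
      have h2 : ‖v j‖ ^ 2 ≤ denom := by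
        rw [Complex.sq_norm]
        exact Finset.single_le_sum (f := fun i => Complex.normSq (v i))
          (fun i _ => Complex.normSq_nonneg _) (Finset.mem_univ j)
      nlinarith [norm_nonneg (v i), norm_nonneg (v j)]
    have hnum : (dotProduct (star v) (A.mulVec v)).re ≤ B * denom := by
      have h1 : dotProduct (star v) (A.mulVec v) = ∑ i, (star v) i * (A.mulVec v) i := rfl
      calc (dotProduct (star v) (A.mulVec v)).re
          ≤ ‖dotProduct (star v) (A.mulVec v)‖ := Complex.re_le_norm _
        _ ≤ ∑ i, ‖(star v) i * (A.mulVec v) i‖ := by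
            rw [h1]; exact norm_sum_le _ _
        _ ≤ ∑ i, ∑ j, ‖A i j‖ * denom := by
            refine Finset.sum_le_sum fun i _ => ?_
            rw [norm_mul]
            have hmv : ‖(A.mulVec v) i‖ ≤ ∑ j, ‖A i j * v j‖ := by
              have h2 : (A.mulVec v) i = ∑ j, A i j * v j := rfl
              rw [h2]; exact norm_sum_le _ _
            have hsv : ‖(star v) i‖ = ‖v i‖ := by
              simp [Pi.star_apply]
            calc ‖(star v) i‖ * ‖(A.mulVec v) i‖
                ≤ ‖v i‖ * ∑ j, ‖A i j * v j‖ := by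
                  rw [hsv]
                  exact mul_le_mul_of_nonneg_left hmv (norm_nonneg _)
              _ = ∑ j, ‖v i‖ * (‖A i j‖ * ‖v j‖) := by
                  rw [Finset.mul_sum]
                  exact Finset.sum_congr rfl fun j _ => by rw [norm_mul]
              _ ≤ ∑ j, ‖A i j‖ * denom := by
                  refine Finset.sum_le_sum fun j _ => ?_
                  have := hvb i j
                  nlinarith [norm_nonneg (A i j), norm_nonneg (v i),
                    norm_nonneg (v j)]
        _ = B * denom := by
            rw [hB, Finset.sum_mul]
            exact Finset.sum_congr rfl fun i _ => (Finset.sum_mul _ _ _).symm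
    rw [rayleigh, div_le_iff₀ hpos]
    exact hnum

lemma exists_finrank_sub (d q : ℕ) (hqd : q ≤ d) :
    ∃ V : Submodule ℂ (Fin d → ℂ), Module.finrank ℂ V = q := by
  refine ⟨Submodule.span ℂ (Set.range fun i : Fin q => Pi.single (Fin.castLE hqd i) (1:ℂ)), ?_⟩
  rw [finrank_span_eq_card]
  · simp
  · have h1 := (Pi.basisFun ℂ (Fin d)).linearIndependent
    have h2 := h1.comp (Fin.castLE hqd) (Fin.castLE_injective hqd)
    convert h2 using 1; ext i : 1; simp [Function.comp]

/-- If the Bergman metric of a bounded domain `Ω` admits a potential with self-bounded complex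
gradient comparable to `g_Ω`, and `σ_{d-q+1}(g_{Ω,z}) → ∞` as `z → ∂Ω`, then `Ω` satisfies
McNeal's condition `(P̃_q)`. -/
theorem stmt_11 {d q : ℕ} (hq1 : 1 ≤ q) (hqd : q ≤ d) (Ω : Set (Ed d)) (hΩ : IsOpen Ω)
    (hbdd : Bornology.IsBounded Ω) (C : ℝ) (hC : 0 < C)
    (lam : Ed d → ℝ) (hlam : ContDiffOn ℝ 2 lam Ω)
    (hcomp : ∀ z ∈ Ω, ∀ ξ : Ed d,
      (1/C) * bergmanMetric Ω z ξ ≤ (leviForm lam z ξ).re ∧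
      (leviForm lam z ξ).re ≤ C * bergmanMetric Ω z ξ)
    (hsbg : ∀ z ∈ Ω, ∀ ξ : Ed d, ‖delForm lam z ξ‖ ^ 2 ≤ (leviForm lam z ξ).re)
    (hblow : ∀ M : ℝ, ∃ K : Set (Ed d), IsCompact K ∧ K ⊆ Ω ∧
      ∀ z ∈ Ω \ K, M ≤ smallEig q (bergmanMetricMatrix Ω z)) :
    ∀ M : ℝ, 0 < M → ∃ lamM : Ed d → ℝ, ContDiffOn ℝ 2 lamM Ω ∧
      (∀ z ∈ Ω, ∀ ξ : Ed d, 0 ≤ (leviForm lamM z ξ).re) ∧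
      (∀ z ∈ Ω, ∀ ξ : Ed d, ‖delForm lamM z ξ‖ ^ 2 ≤ (leviForm lamM z ξ).re) ∧
      ∃ K : Set (Ed d), IsCompact K ∧ K ⊆ Ω ∧
        ∀ z ∈ Ω \ K, M ≤ smallEig q (leviMatrix lamM z) := by
  intro M hM
  obtain ⟨K, hK, hKΩ, hKM⟩ := hblow (C * M)
  have hL0 : ∀ z ∈ Ω, ∀ ξ : Ed d, 0 ≤ (leviForm lam z ξ).re := fun z hz ξ =>
    le_trans (sq_nonneg _) (hsbg z hz ξ)
  refine ⟨lam, hlam, hL0, hsbg, K, hK, hKΩ, ?_⟩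
  intro z hz
  have hzΩ : z ∈ Ω := hz.1
  have hB := hKM z hz
  have hg0 : ∀ ξ : Ed d, 0 ≤ bergmanMetric Ω z ξ := by
    intro ξ
    have h1 := (hcomp z hzΩ ξ).2
    have h2 := hL0 z hzΩ ξ
    nlinarith
  have hrayL0 : ∀ v : Fin d → ℂ, 0 ≤ rayleigh (leviMatrix lam z) v := by
    intro v
    unfold rayleigh
    rw [dot_eq_levi]
    exact div_nonneg (hL0 z hzΩ _) (Finset.sum_nonneg fun i _ => Complex.normSq_nonneg _)
  have hrayB0 : ∀ v : Fin d → ℂ, 0 ≤ rayleigh (bergmanMetricMatrix Ω z) v := by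
    intro v
    unfold rayleigh bergmanMetricMatrix
    rw [dot_eq_levi]
    exact div_nonneg (hg0 _) (Finset.sum_nonneg fun i _ => Complex.normSq_nonneg _)
  have hkey : ∀ v : Fin d → ℂ,
      rayleigh (bergmanMetricMatrix Ω z) v ≤ C * rayleigh (leviMatrix lam z) v := by
    intro v
    have hden0 : 0 ≤ ∑ i, Complex.normSq (v i) :=
      Finset.sum_nonneg fun i _ => Complex.normSq_nonneg _
    rcases eq_or_lt_of_le hden0 with h0 | hpos
    · simp [rayleigh, ← h0]
    · unfold rayleigh bergmanMetricMatrix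
      rw [dot_eq_levi, dot_eq_levi]
      set ξ : Ed d := (WithLp.equiv 2 (Fin d → ℂ)).symm (star v) with hξ
      have h1 := (hcomp z hzΩ ξ).1
      have h2 : bergmanMetric Ω z ξ ≤ C * (leviForm lam z ξ).re := by
        have h3 := mul_le_mul_of_nonneg_left h1 hC.le
        rw [← mul_assoc, mul_one_div, div_self hC.ne', one_mul] at h3
        exact h3
      rw [mul_div_assoc'] 
      exact div_le_div_of_nonneg_right h2 hpos.le
  unfold smallEig
  apply le_csInf
  · obtain ⟨V₀, hV₀⟩ := exists_finrank_sub d q hqd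
    exact ⟨_, V₀, hV₀, rfl⟩
  · rintro m ⟨V, hVq, rfl⟩
    have hVbot : V ≠ ⊥ := by
      intro h; rw [h, finrank_bot] at hVq; omega
    obtain ⟨v₀, hv₀V, hv₀⟩ := Submodule.exists_mem_ne_zero_of_ne_bot hVbot
    have hbddl : BddAbove {r | ∃ v ∈ V, v ≠ 0 ∧ r = rayleigh (leviMatrix lam z) v} := by
      refine ⟨∑ i, ∑ j, ‖leviMatrix lam z i j‖, ?_⟩
      rintro r ⟨v, -, -, rfl⟩; exact rayleigh_le _ _
    have hb_le : sSup {r | ∃ v ∈ V, v ≠ 0 ∧ r = rayleigh (bergmanMetricMatrix Ω z) v}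
        ≤ C * sSup {r | ∃ v ∈ V, v ≠ 0 ∧ r = rayleigh (leviMatrix lam z) v} := by
      have hSbne : Set.Nonempty
          {r | ∃ v ∈ V, v ≠ 0 ∧ r = rayleigh (bergmanMetricMatrix Ω z) v} :=
        ⟨_, v₀, hv₀V, hv₀, rfl⟩
      apply csSup_le hSbne
      rintro r ⟨v, hvV, hv, rfl⟩
      calc rayleigh (bergmanMetricMatrix Ω z) v
          ≤ C * rayleigh (leviMatrix lam z) v := hkey v
        _ ≤ C * sSup {r | ∃ v ∈ V, v ≠ 0 ∧ r = rayleigh (leviMatrix lam z) v} :=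
            mul_le_mul_of_nonneg_left (le_csSup hbddl ⟨v, hvV, hv, rfl⟩) hC.le
    have hbdd_below : BddBelow {m : ℝ | ∃ V' : Submodule ℂ (Fin d → ℂ),
        Module.finrank ℂ V' = q ∧
        m = sSup {r | ∃ v ∈ V', v ≠ 0 ∧ r = rayleigh (bergmanMetricMatrix Ω z) v}} := by
      refine ⟨0, ?_⟩
      rintro m ⟨V', hV'q, rfl⟩
      have hV'bot : V' ≠ ⊥ := by intro h; rw [h, finrank_bot] at hV'q; omega
      obtain ⟨w, hwV, hw⟩ := Submodule.exists_mem_ne_zero_of_ne_bot hV'bot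
      have hbdd' : BddAbove {r | ∃ v ∈ V', v ≠ 0 ∧ r = rayleigh (bergmanMetricMatrix Ω z) v} := by
        refine ⟨∑ i, ∑ j, ‖bergmanMetricMatrix Ω z i j‖, ?_⟩
        rintro r ⟨v, -, -, rfl⟩; exact rayleigh_le _ _
      exact le_trans (hrayB0 w) (le_csSup hbdd' ⟨w, hwV, hw, rfl⟩)
    have h1 : smallEig q (bergmanMetricMatrix Ω z)
        ≤ sSup {r | ∃ v ∈ V, v ≠ 0 ∧ r = rayleigh (bergmanMetricMatrix Ω z) v} :=
      csInf_le hbdd_below ⟨V, hVq, rfl⟩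
    have h2 : C * M ≤ C * sSup {r | ∃ v ∈ V, v ≠ 0 ∧ r = rayleigh (leviMatrix lam z) v} :=
      le_trans hB (le_trans h1 hb_le)
    exact le_of_mul_le_mul_left h2 hC


end
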